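/- In the instance with T ≥ 1 rounds, B = T units, one arrival per round (N = T, so the proportional allocation is B/N = 1), unit utility weight w = 1, perishing times T_b = b, and allocation order σ(b) = T+1−b: every allocation sequence (X_t)_{t=1}^T with X_t ≥ 0 and X_t not exceeding available stock in round t, and with positive remaining stock at the start of round T (feasibility), satisfies counterfactual envy Δ_EF = max_{t} |X_t − 1| ≥ 1 − 1/T and inefficiency Δ_efficiency = T − Σ_{t=1}^T X_t ≥ T − 1. -/

import Mathlib

open Finset

/-- Remaining quantity of unit `b` after allocating a total amount `A` from the stock `q`,
exhausting units in increasing `rank` order. -/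
noncomputable def allocRemain {ι : Type*} [Fintype ι] (rank : ι → ℕ) (q : ι → ℝ) (A : ℝ)
    (b : ι) : ℝ :=
  q b - min (q b) (max 0 (A - ∑ b' ∈ Finset.univ.filter (fun b' => rank b' < rank b), q b'))

/-- State of the ordered allocation dynamics: `stockState rank Tb A t b` is the remaining
quantity of unit `b` at the start of round `t` (each unit starts with quantity `1`; in round
`t` the total `A t` is allocated in increasing `rank` order, capped by the available stock,
and then every unit `b` with `Tb b = t` has its remaining quantity spoil). -/
noncomputable def stockState {ι : Type*} [Fintype ι] (rank : ι → ℕ) (Tb : ι → ℕ)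
    (A : ℕ → ℝ) : ℕ → ι → ℝ
  | 0 => fun _ => 1
  | t + 1 => fun b =>
      if Tb b = t then 0
      else allocRemain rank (stockState rank Tb A t) (A t) b

/-- In the instance with `T` rounds, `B = T` units (unit `b ∈ {1,…,T}` is
`i : Fin T` with `b = i + 1`), one arrival per round (so `B/N = 1`), unit weight `1`,
perishing times `T_b = b` and allocation order `σ(b) = T + 1 − b`: every feasible allocation
sequence — `X t ≥ 0`, `X t` not exceeding available stock, and positive remaining stock at the
start of round `T` — has counterfactual envy `max_t |X t − 1| ≥ 1 − 1/T` and inefficiency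
`T − Σ_t X t ≥ T − 1`. -/
theorem stmt4 (T : ℕ) (hT : 1 ≤ T)
    (X : ℕ → ℝ) (hX0 : X 0 = 0) (hXnn : ∀ t ∈ Finset.Icc 1 T, 0 ≤ X t)
    (hXstock : ∀ t ∈ Finset.Icc 1 T,
      X t ≤ ∑ b, stockState (fun i : Fin T => T - (i : ℕ)) (fun i : Fin T => (i : ℕ) + 1) X t b)
    (hfeas : 0 < ∑ b,
      stockState (fun i : Fin T => T - (i : ℕ)) (fun i : Fin T => (i : ℕ) + 1) X T b) :
    (∃ t ∈ Finset.Icc 1 T, 1 - 1 / (T : ℝ) ≤ |X t - 1|) ∧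
    (T : ℝ) - 1 ≤ (T : ℝ) - ∑ t ∈ Finset.Icc 1 T, X t := by

  classical
  have hTpos : 0 < T := hT
  set rk : Fin T → ℕ := (fun i : Fin T => T - (i : ℕ)) with hrk
  set Tb : Fin T → ℕ := (fun i : Fin T => (i : ℕ) + 1) with hTbdef
  set S : ℕ → Fin T → ℝ := stockState rk Tb X with hS
  set L : Fin T := ⟨T - 1, by omega⟩ with hLdef
  -- nonnegativity of stock
  have hnn : ∀ t (b : Fin T), 0 ≤ S t b := by
    intro t
    induction t with
    | zero => intro b; simp [hS, stockState]
    | succ n ih =>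
      intro b
      show (0:ℝ) ≤ stockState rk Tb X (n+1) b
      rw [stockState]
      by_cases he : Tb b = n
      · simp [he]
      · simp only [he, if_false, allocRemain]
        have := min_le_left (stockState rk Tb X n b)
          (max 0 (X n - ∑ b' ∈ Finset.univ.filter (fun b' => rk b' < rk b),
            stockState rk Tb X n b'))
        linarith
  -- zero is absorbing
  have hzero : ∀ t (b : Fin T), S t b = 0 → S (t+1) b = 0 := by
    intro t b h0
    show stockState rk Tb X (t+1) b = 0
    rw [stockState]
    by_cases he : Tb b = t
    · simp [he]
    · simp only [he, if_false, allocRemain]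
      have h0' : stockState rk Tb X t b = 0 := h0
      rw [h0']
      rw [min_eq_left (le_max_left 0 _)]
      ring
  -- dead units: after spoilage, stock is zero
  have hdead : ∀ (b : Fin T) (t : ℕ), (b : ℕ) + 2 ≤ t → S t b = 0 := by
    intro b t ht
    induction t with
    | zero => omega
    | succ n ih =>
      by_cases h : (b : ℕ) + 2 ≤ n
      · exact hzero n b (ih h)
      · have he : Tb b = n := by simp only [hTbdef]; omega
        show stockState rk Tb X (n+1) b = 0
        rw [stockState]; simp [he]
  -- the total stock at time T is the stock of the last unit
  have hL1 : (L : ℕ) + 1 = T := by simp [hLdef]; omega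
  have hsumT : ∀ t, T ≤ t → (∑ b, S t b) = S t L := by
    intro t htt
    rw [Finset.sum_eq_single L]
    · intro b _ hb
      apply hdead
      have hbT : (b : ℕ) < T := b.isLt
      have : (b : ℕ) ≠ T - 1 := by
        intro hc
        apply hb
        apply Fin.ext
        simpa [hLdef] using hc
      omega
    · intro h; exact absurd (Finset.mem_univ L) h
  -- the filter for L is empty
  have hfilter : (Finset.univ.filter (fun b' => rk b' < rk L)) = (∅ : Finset (Fin T)) := by
    apply Finset.eq_empty_of_forall_notMem
    intro b' hb'
    simp only [Finset.mem_filter, hrk, hLdef] at hb'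
    have hbT : (b' : ℕ) < T := b'.isLt
    omega
  -- recursion for L
  have hrec : ∀ t, t < T → S (t+1) L = S t L - min (S t L) (max 0 (X t)) := by
    intro t htT
    have he : Tb L ≠ t := by simp only [hTbdef]; rw [hL1]; omega
    show stockState rk Tb X (t+1) L = _
    rw [stockState]
    simp only [he, if_false, allocRemain, hfilter, Finset.sum_empty, sub_zero]
    rfl
  -- positivity of L's stock
  have hposT : 0 < S T L := by rw [← hsumT T le_rfl]; exact hfeas
  have hpos : ∀ t, t ≤ T → 0 < S t L := by
    intro t htT
    rcases lt_or_eq_of_le (hnn t L) with h | h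
    · exact h
    · exfalso
      have : ∀ k, S (t + k) L = 0 := by
        intro k
        induction k with
        | zero => exact h.symm
        | succ n ih => exact hzero _ _ ih
      have := this (T - t)
      rw [show t + (T - t) = T by omega] at this
      linarith
  -- exact step
  have hstep : ∀ t, 1 ≤ t → t + 1 ≤ T → S (t+1) L = S t L - X t := by
    intro t h1 h2
    have hXt : 0 ≤ X t := hXnn t (Finset.mem_Icc.mpr ⟨h1, by omega⟩)
    have hmax : max 0 (X t) = X t := max_eq_right hXt
    have hr := hrec t (by omega)
    rw [hmax] at hr
    have hp : 0 < S (t+1) L := hpos (t+1) h2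
    by_cases hle : X t ≤ S t L
    · rw [min_eq_right hle] at hr; exact hr
    · rw [min_eq_left (le_of_not_ge hle)] at hr
      rw [hr] at hp; simp at hp
  have hq1 : S 1 L = 1 := by
    have he : Tb L ≠ 0 := by simp only [hTbdef]; omega
    show stockState rk Tb X 1 L = 1
    rw [show (1:ℕ) = 0 + 1 from rfl, stockState]
    simp only [he, if_false, allocRemain, hfilter, Finset.sum_empty, sub_zero]
    have h0 : stockState rk Tb X 0 L = 1 := rfl
    rw [h0, hX0]
    norm_num
  -- closed form
  have hform : ∀ t, 1 ≤ t → t ≤ T → S t L = 1 - ∑ s ∈ Finset.Icc 1 (t-1), X s := by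
    intro t h1 h2
    induction t with
    | zero => omega
    | succ n ih =>
      by_cases hn : 1 ≤ n
      · have hform_n := ih hn (by omega)
        rw [hstep n hn h2, hform_n]
        rw [show n + 1 - 1 = n from rfl]
        rw [show n = (n-1) + 1 by omega, Finset.sum_Icc_succ_top (by omega : 1 ≤ n - 1 + 1)]
        rw [show n - 1 + 1 = n by omega]
        ring
      · have : n = 0 := by omega
        subst this
        simpa using hq1
  -- total allocation is at most 1
  have hXT : X T ≤ S T L := by
    have := hXstock T (Finset.mem_Icc.mpr ⟨hT, le_rfl⟩)
    rwa [hsumT T le_rfl] at this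
  have hformT := hform T hT le_rfl
  have hsumle : ∑ t ∈ Finset.Icc 1 T, X t ≤ 1 := by
    rw [show T = (T-1) + 1 by omega, Finset.sum_Icc_succ_top (by omega : 1 ≤ T - 1 + 1),
      show T - 1 + 1 = T by omega]
    rw [hformT] at hXT
    linarith
  constructor
  · -- envy bound
    have hcard : (Finset.Icc 1 T).card = T := by simp
    have hne : (Finset.Icc 1 T).Nonempty := ⟨1, Finset.mem_Icc.mpr ⟨le_rfl, hT⟩⟩
    have hsconst : ∑ _t ∈ Finset.Icc 1 T, (1 / (T:ℝ)) = 1 := by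
      rw [Finset.sum_const, hcard]
      rw [nsmul_eq_mul]
      field_simp [show (T:ℝ) ≠ 0 by exact_mod_cast hTpos.ne']
    obtain ⟨t, ht, hle⟩ := Finset.exists_le_of_sum_le (f := X)
      (g := fun _ => 1 / (T:ℝ)) hne (by rw [hsconst]; exact hsumle)
    refine ⟨t, ht, ?_⟩
    have : 1 - X t ≤ |X t - 1| := by
      rw [abs_sub_comm]
      exact le_abs_self _
    linarith
  · linarith
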